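/- Let L be a finite lattice whose height equals the number of its atoms. Then L is isomorphic to the lattice of flats of some boolean representable finite simplicial complex if and only if L is isomorphic to the lattice (2^{At(L)}, ⊆) of all subsets of At(L) ordered by inclusion. -/

import Mathlib

universe u v

/-- `F ⊆ V` is a flat of the simplicial complex `(V, H)`: for every `I ∈ H` with
`I ⊆ F` and every `p ∈ V \ F`, `I ∪ {p} ∈ H`. -/
def IsCFlat {α : Type u} (V : Set α) (H : Set (Set α)) (F : Set α) : Prop :=
  F ⊆ V ∧ ∀ I ∈ H, I ⊆ F → ∀ p ∈ V \ F, insert p I ∈ H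

/-- `(V, H)` is a finite simplicial complex: `V` is finite and nonempty, and
`H ⊆ 2^V` is nonempty and closed under taking subsets. -/
def IsCpx {α : Type u} (V : Set α) (H : Set (Set α)) : Prop :=
  V.Finite ∧ V.Nonempty ∧ H.Nonempty ∧ (∀ X ∈ H, X ⊆ V) ∧ ∀ X ∈ H, ∀ Y ⊆ X, Y ∈ H

/-- `X` is a transversal of the successive differences for some chain
`F 0 ⊂ F 1 ⊂ … ⊂ F k` of flats of `(V, H)`: `X` admits an enumeration
`x 0, …, x (k-1)` with `x i ∈ F (i+1) \ F i`. -/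
def TransvSD {α : Type u} (V : Set α) (H : Set (Set α)) (X : Set α) : Prop :=
  ∃ (k : ℕ) (F : Fin (k + 1) → Set α) (x : Fin k → α),
    (∀ i, IsCFlat V H (F i)) ∧ StrictMono F ∧
    Function.Injective x ∧ X = Set.range x ∧
    ∀ i : Fin k, x i ∈ F i.succ \ F i.castSucc

/-- `(V, H)` is boolean representable: every `X ∈ H` is a transversal of the
successive differences for some chain of flats of `(V, H)`. -/
def BoolRep {α : Type u} (V : Set α) (H : Set (Set α)) : Prop :=
  ∀ X ∈ H, TransvSD V H X

/-- The height of `L` is `n`: there is a chain `x_0 < … < x_n` and no longer chain. -/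
def hasHeight (L : Type u) [Preorder L] (n : ℕ) : Prop :=
  (∃ c : Fin (n + 1) → L, StrictMono c) ∧
    ∀ (m : ℕ) (c : Fin (m + 1) → L), StrictMono c → m ≤ n



namespace BRWork

variable {α : Type u} (V : Set α) (H : Set (Set α))

/-- closure of a set in the flats of (V,H) -/
def clo (Z : Set α) : Set α := ⋂₀ {F | IsCFlat V H F ∧ Z ⊆ F}

/-- the bottom flat -/
def bt : Set α := clo V H ∅

/-- point closure -/
def pcl (p : α) : Set α := clo V H (insert p (bt V H))

/-- atom flats -/
def AtFl (A : Set α) : Prop :=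
  IsCFlat V H A ∧ bt V H ⊂ A ∧ ∀ D, IsCFlat V H D → D ⊂ A → D = bt V H

/-- the set of atom flats -/
def Ats : Set (Set α) := {A | AtFl V H A}

/-- join of a family of flats -/
def Joinf (T : Set (Set α)) : Set α := clo V H (bt V H ∪ ⋃₀ T)

variable {V H}

lemma flat_top : IsCFlat V H V := ⟨le_refl _, fun I hI _ p hp => absurd hp.2 (not_not_intro hp.1)⟩

lemma subset_clo {Z : Set α} : Z ⊆ clo V H Z := fun z hz F hF => hF.2 hz

lemma clo_min {Z F : Set α} (hF : IsCFlat V H F) (hZF : Z ⊆ F) : clo V H Z ⊆ F :=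
  Set.sInter_subset_of_mem ⟨hF, hZF⟩

lemma clo_subset_V {Z : Set α} (hZ : Z ⊆ V) : clo V H Z ⊆ V := clo_min flat_top hZ

lemma clo_flat {Z : Set α} (hZ : Z ⊆ V) : IsCFlat V H (clo V H Z) := by
  refine ⟨clo_subset_V hZ, fun I hI hIc p hp => ?_⟩
  have : ∃ F, (IsCFlat V H F ∧ Z ⊆ F) ∧ p ∉ F := by
    by_contra hc
    push_neg at hc
    exact hp.2 (fun F hF => hc F hF)
  obtain ⟨F, hF, hpF⟩ := this
  exact hF.1.2 I hI (hIc.trans (Set.sInter_subset_of_mem hF)) p ⟨hp.1, hpF⟩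

lemma clo_mono {Z Z' : Set α} (h : Z ⊆ Z') : clo V H Z ⊆ clo V H Z' := by
  apply Set.sInter_subset_sInter
  intro F hF
  exact ⟨hF.1, h.trans hF.2⟩

lemma flat_bt : IsCFlat V H (bt V H) := clo_flat (Set.empty_subset _)

lemma bt_subset {F : Set α} (hF : IsCFlat V H F) : bt V H ⊆ F :=
  clo_min hF (Set.empty_subset _)

lemma clo_flat_self {F : Set α} (hF : IsCFlat V H F) : clo V H F = F :=
  le_antisymm (clo_min hF le_rfl) subset_clo

lemma flat_pcl {p : α} (hp : p ∈ V) : IsCFlat V H (pcl V H p) :=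
  clo_flat (Set.insert_subset hp flat_bt.1)

lemma mem_pcl {p : α} : p ∈ pcl V H p := subset_clo (Set.mem_insert _ _)

lemma bt_subset_pcl {p : α} : bt V H ⊆ pcl V H p :=
  (Set.subset_insert _ _).trans subset_clo

lemma pcl_subset {p : α} {F : Set α} (hF : IsCFlat V H F) (hpF : p ∈ F) : pcl V H p ⊆ F :=
  clo_min hF (Set.insert_subset hpF (bt_subset hF))

/-- point in flat iff pcl below flat -/
lemma mem_flat_iff_pcl {p : α} {F : Set α} (hF : IsCFlat V H F) :
    p ∈ F ↔ pcl V H p ⊆ F :=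
  ⟨fun h => pcl_subset hF h, fun h => h mem_pcl⟩

lemma flat_subset_Joinf {T : Set (Set α)} {t : Set α} (ht : t ∈ T) : t ⊆ Joinf V H T :=
  (Set.subset_sUnion_of_mem ht).trans ((Set.subset_union_right).trans subset_clo)

lemma bt_subset_Joinf {T : Set (Set α)} : bt V H ⊆ Joinf V H T :=
  (Set.subset_union_left).trans subset_clo

lemma Joinf_flat {T : Set (Set α)} (hT : ∀ t ∈ T, IsCFlat V H t) : IsCFlat V H (Joinf V H T) := by
  apply clo_flat
  apply Set.union_subset flat_bt.1
  exact Set.sUnion_subset fun t ht => (hT t ht).1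

lemma Joinf_min {T : Set (Set α)} {F : Set α} (hF : IsCFlat V H F) (h : ∀ t ∈ T, t ⊆ F) :
    Joinf V H T ⊆ F :=
  clo_min hF (Set.union_subset (bt_subset hF) (Set.sUnion_subset h))

lemma Joinf_mono {T T' : Set (Set α)} (h : T ⊆ T') : Joinf V H T ⊆ Joinf V H T' :=
  clo_mono (Set.union_subset_union_right _ (Set.sUnion_mono h))

lemma Joinf_empty : Joinf V H (∅ : Set (Set α)) = bt V H := by
  unfold Joinf
  rw [Set.sUnion_empty, Set.union_empty]
  exact clo_flat_self flat_bt

section WithCpx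

variable (cpx : IsCpx V H)
include cpx

lemma empty_mem_H : (∅ : Set α) ∈ H := by
  obtain ⟨X, hX⟩ := cpx.2.2.1
  exact cpx.2.2.2.2 X hX ∅ (Set.empty_subset _)

/-- singleton faces -/
lemma singleton_mem_H {p : α} (hpV : p ∈ V) (hpB : p ∉ bt V H) : ({p} : Set α) ∈ H := by
  have := flat_bt (V := V) (H := H)
  have h := this.2 ∅ (empty_mem_H cpx) (Set.empty_subset _) p ⟨hpV, hpB⟩
  simpa using h

/-- extension of a face within a flat by an outside point -/
lemma face_insert {F I : Set α} (hF : IsCFlat V H F) (hI : I ∈ H) (hIF : I ⊆ F)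
    {p : α} (hpV : p ∈ V) (hpF : p ∉ F) : insert p I ∈ H :=
  hF.2 I hI hIF p ⟨hpV, hpF⟩

/-- pair faces for points with different point closures -/
lemma pair_mem_H {u p : α} (huV : u ∈ V) (huB : u ∉ bt V H) (hpV : p ∈ V) (hpB : p ∉ bt V H)
    (hne : pcl V H u ≠ pcl V H p) : ({u, p} : Set α) ∈ H := by
  by_cases hc : p ∈ pcl V H u
  · -- then u ∉ pcl p
    have hu : u ∉ pcl V H p := by
      intro hu
      apply hne
      apply le_antisymm
      · exact pcl_subset (flat_pcl hpV) hu
      · exact pcl_subset (flat_pcl huV) hc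
    have h1 : ({p} : Set α) ∈ H := singleton_mem_H cpx hpV hpB
    exact face_insert cpx (flat_pcl hpV) h1 (Set.singleton_subset_iff.mpr mem_pcl) huV hu
  · have h1 : ({u} : Set α) ∈ H := singleton_mem_H cpx huV huB
    have h2 := face_insert cpx (flat_pcl huV) h1 (Set.singleton_subset_iff.mpr mem_pcl) hpV hc
    rw [Set.pair_comm]
    exact h2

end WithCpx


section WithBR

variable (cpx : IsCpx V H) (br : BoolRep V H)
include cpx br

/-- faces avoid the bottom flat -/
lemma face_notin_bt {I : Set α} (hI : I ∈ H) {u : α} (hu : u ∈ I) : u ∉ bt V H := by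
  obtain ⟨k, F, x, hflat, hmono, hinj, hrange, hmem⟩ := br I hI
  rw [hrange] at hu
  obtain ⟨i, rfl⟩ := hu
  intro hb
  exact (hmem i).2 (bt_subset (hflat _) hb)

/-- two distinct points of a common face have distinct point closures -/
lemma face_classes_distinct {I : Set α} (hI : I ∈ H) {u v : α} (hu : u ∈ I) (hv : v ∈ I)
    (hne : u ≠ v) : pcl V H u ≠ pcl V H v := by
  obtain ⟨k, F, x, hflat, hmono, hinj, hrange, hmem⟩ := br I hI
  rw [hrange] at hu hv
  obtain ⟨i, rfl⟩ := hu
  obtain ⟨j, rfl⟩ := hv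
  have hij : i ≠ j := fun h => hne (by rw [h])
  -- wlog i < j
  rcases lt_or_gt_of_ne hij with hlt | hlt
  · intro heq
    have h1 : x i ∈ F j.castSucc := by
      have : F i.succ ≤ F j.castSucc := hmono.monotone (Fin.succ_le_castSucc_iff.mpr hlt)
      exact this (hmem i).1
    have h2 : pcl V H (x i) ⊆ F j.castSucc := pcl_subset (hflat _) h1
    rw [heq] at h2
    exact (hmem j).2 (h2 mem_pcl)
  · intro heq
    have h1 : x j ∈ F i.castSucc := by
      have : F j.succ ≤ F i.castSucc := hmono.monotone (Fin.succ_le_castSucc_iff.mpr hlt)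
      exact this (hmem j).1
    have h2 : pcl V H (x j) ⊆ F i.castSucc := pcl_subset (hflat _) h1
    rw [← heq] at h2
    exact (hmem i).2 (h2 mem_pcl)

/-- the class flat: B ∪ [q] is a flat -/
lemma class_flat {q : α} (hqV : q ∈ V) (hqB : q ∉ bt V H) :
    IsCFlat V H (bt V H ∪ {r | r ∈ V ∧ pcl V H r = pcl V H q}) := by
  constructor
  · exact Set.union_subset flat_bt.1 (fun r hr => hr.1)
  · intro I hI hIZ p hp
    have hpV : p ∈ V := hp.1
    have hpB : p ∉ bt V H := fun hb => hp.2 (Set.mem_union_left _ hb)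
    have hpcl : pcl V H p ≠ pcl V H q := fun h => hp.2 (Set.mem_union_right _ ⟨hpV, h⟩)
    rcases Set.eq_empty_or_nonempty I with rfl | ⟨u, hu⟩
    · simpa using singleton_mem_H cpx hpV hpB
    · -- I = {u}
      have huC : u ∈ {r | r ∈ V ∧ pcl V H r = pcl V H q} := by
        rcases hIZ hu with h | h
        · exact absurd h (face_notin_bt cpx br hI hu)
        · exact h
      have hIu : I = {u} := by
        apply Set.eq_singleton_iff_unique_mem.mpr
        refine ⟨hu, fun v hv => ?_⟩
        by_contra hne
        have hvC : v ∈ {r | r ∈ V ∧ pcl V H r = pcl V H q} := by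
          rcases hIZ hv with h | h
          · exact absurd h (face_notin_bt cpx br hI hv)
          · exact h
        exact face_classes_distinct cpx br hI hv hu hne (hvC.2.trans huC.2.symm)
      subst hIu
      have := pair_mem_H cpx huC.1 (face_notin_bt cpx br hI hu) hpV hpB
        (fun h => hpcl ((h.symm.trans huC.2)))
      rw [Set.pair_comm] at this
      exact this

/-- PTATOM: every point closure is an atom flat -/
lemma pcl_atom {q : α} (hqV : q ∈ V) (hqB : q ∉ bt V H) : AtFl V H (pcl V H q) := by
  have hZ := class_flat cpx br hqV hqB
  have hPZ : pcl V H q = bt V H ∪ {r | r ∈ V ∧ pcl V H r = pcl V H q} := by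
    apply le_antisymm
    · exact pcl_subset hZ (Set.mem_union_right _ ⟨hqV, rfl⟩)
    · apply Set.union_subset bt_subset_pcl
      intro r hr
      rw [← hr.2]; exact mem_pcl
  refine ⟨flat_pcl hqV, ?_, ?_⟩
  · refine ⟨bt_subset_pcl, fun hc => hqB (hc mem_pcl)⟩
  · intro D hD hDP
    by_contra hne
    have : ∃ r ∈ D, r ∉ bt V H := by
      by_contra hc
      push_neg at hc
      exact hne (le_antisymm hc (bt_subset hD))
    obtain ⟨r, hrD, hrB⟩ := this
    have hrP : r ∈ pcl V H q := hDP.1 hrD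
    have hrC : pcl V H r = pcl V H q := by
      rw [hPZ] at hrP
      rcases hrP with h | h
      · exact absurd h hrB
      · exact h.2
    have : pcl V H q ⊆ D := by
      rw [← hrC]
      exact pcl_subset hD hrD
    exact absurd (le_antisymm hDP.1 this) (ne_of_lt hDP)

/-- atom flats are point closures of each of their non-bottom points -/
lemma atom_eq_pcl {A : Set α} (hA : AtFl V H A) {r : α} (hr : r ∈ A) (hrB : r ∉ bt V H) :
    pcl V H r = A := by
  have h1 : pcl V H r ⊆ A := pcl_subset hA.1 hr
  rcases lt_or_eq_of_le h1 with h | h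
  · exact absurd (hA.2.2 _ (flat_pcl (hA.1.1 hr)) h) (fun hc => hrB (hc ▸ mem_pcl))
  · exact h

lemma atom_exists_pt {A : Set α} (hA : AtFl V H A) : ∃ r ∈ A, r ∉ bt V H := by
  obtain ⟨r, hr1, hr2⟩ := Set.exists_of_ssubset hA.2.1
  exact ⟨r, hr1, hr2⟩


omit cpx br in
/-- prepend bottom to a chain -/
lemma cons_chain {n : ℕ} (c : Fin (n + 1) → Set α) (hflat : ∀ i, IsCFlat V H (c i))
    (hmono : StrictMono c) (hne : bt V H ≠ c 0) :
    ∃ c' : Fin (n + 2) → Set α, (∀ i, IsCFlat V H (c' i)) ∧ StrictMono c' := by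
  refine ⟨Fin.cons (bt V H) c, ?_, ?_⟩
  · intro i
    induction i using Fin.cases with
    | zero => simpa using flat_bt
    | succ j => simpa using hflat j
  · rw [Fin.strictMono_iff_lt_succ]
    intro i
    induction i using Fin.cases with
    | zero =>
      rw [Fin.castSucc_zero, Fin.cons_zero, Fin.succ_zero_eq_one]
      have h1 : (1 : Fin (n+2)) = Fin.succ 0 := by simp
      rw [h1, Fin.cons_succ]
      exact lt_of_le_of_ne (bt_subset (hflat 0)) hne
    | succ j =>
      rw [← Fin.succ_castSucc, Fin.cons_succ, Fin.cons_succ]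
      exact hmono (Fin.castSucc_lt_succ (i := j))

omit cpx br in
/-- append top to a chain -/
lemma snoc_chain {n : ℕ} (c : Fin (n + 1) → Set α) (hflat : ∀ i, IsCFlat V H (c i))
    (hmono : StrictMono c) (hne : c (Fin.last n) ≠ V) :
    ∃ c' : Fin (n + 2) → Set α, (∀ i, IsCFlat V H (c' i)) ∧ StrictMono c' := by
  refine ⟨Fin.snoc c V, ?_, ?_⟩
  · intro i
    induction i using Fin.lastCases with
    | last => simpa using flat_top
    | cast j => simpa using hflat j
  · rw [Fin.strictMono_iff_lt_succ]
    intro i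
    induction i using Fin.lastCases with
    | last =>
      rw [Fin.succ_last, Fin.snoc_last, Fin.snoc_castSucc]
      exact lt_of_le_of_ne (hflat _).1 hne
    | cast j =>
      rw [Fin.succ_castSucc, Fin.snoc_castSucc, Fin.snoc_castSucc]
      exact hmono (Fin.castSucc_lt_succ (i := j))

section WithChain

variable {n : ℕ}
  (hmax : ∀ (m : ℕ) (c : Fin (m + 1) → Set α), (∀ i, IsCFlat V H (c i)) → StrictMono c → m ≤ n)
  (G : Fin (n + 1) → Set α) (hGflat : ∀ i, IsCFlat V H (G i)) (hGmono : StrictMono G)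

include hmax hGflat hGmono

omit cpx br in
lemma G_zero : G 0 = bt V H := by
  by_contra hne
  obtain ⟨c', h1, h2⟩ := cons_chain G hGflat hGmono (fun h => hne h.symm)
  have := hmax (n+1) c' h1 h2
  omega

omit cpx br in
lemma G_last : G (Fin.last n) = V := by
  by_contra hne
  obtain ⟨c', h1, h2⟩ := snoc_chain G hGflat hGmono hne
  have := hmax (n+1) c' h1 h2
  omega

end WithChain


section Main

variable {n : ℕ}
  (hmax : ∀ (m : ℕ) (c : Fin (m + 1) → Set α), (∀ i, IsCFlat V H (c i)) → StrictMono c → m ≤ n)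
  (hn : (Ats V H).ncard = n)
  {G : Fin (n + 1) → Set α} (hGflat : ∀ i, IsCFlat V H (G i)) (hGmono : StrictMono G)
  {x : Fin n → α} (hx1 : ∀ i, x i ∈ G i.succ) (hx2 : ∀ i, x i ∉ G i.castSucc)

include hGflat hGmono hx1 hx2

lemma x_mem_V (i : Fin n) : x i ∈ V := (hGflat i.succ).1 (hx1 i)

lemma x_notin_bt (i : Fin n) : x i ∉ bt V H :=
  fun h => hx2 i (bt_subset (hGflat i.castSucc) h)

lemma pcl_x_atom (i : Fin n) : AtFl V H (pcl V H (x i)) :=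
  pcl_atom cpx br (x_mem_V cpx br hGflat hGmono hx1 hx2 i)
    (x_notin_bt cpx br hGflat hGmono hx1 hx2 i)

lemma pcl_x_inj : Function.Injective (fun i => pcl V H (x i)) := by
  have key : ∀ i j : Fin n, i < j → pcl V H (x i) ≠ pcl V H (x j) := by
    intro i j hij heq
    have h1 : pcl V H (x i) ⊆ G j.castSucc := by
      have hs : pcl V H (x i) ⊆ G i.succ := pcl_subset (hGflat _) (hx1 i)
      exact hs.trans (hGmono.monotone (Fin.succ_le_castSucc_iff.mpr hij))
    rw [heq] at h1
    exact hx2 j (h1 mem_pcl)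
  intro i j h
  by_contra hne
  rcases lt_or_gt_of_ne hne with hlt | hlt
  · exact key i j hlt h
  · exact key j i hlt h.symm

include hn in
/-- every atom flat is the point closure of some x i -/
lemma atoms_eq_pcl_x : ∀ A ∈ Ats V H, ∃ i, pcl V H (x i) = A := by
  have hfin : (Ats V H).Finite := by
    apply Set.Finite.subset (Set.Finite.finite_subsets cpx.1)
    intro A hA
    exact hA.1.1
  have : Finite ↥(Ats V H) := hfin.to_subtype
  set ψ : Fin n → ↥(Ats V H) :=
    fun i => ⟨pcl V H (x i), pcl_x_atom cpx br hGflat hGmono hx1 hx2 i⟩ with hψ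
  have hinj : Function.Injective ψ := by
    intro i j h
    apply pcl_x_inj cpx br hGflat hGmono hx1 hx2
    simpa [hψ, Subtype.ext_iff] using h
  have hcard : Nat.card (Fin n) = Nat.card ↥(Ats V H) := by
    rw [Nat.card_eq_fintype_card, Fintype.card_fin, Nat.card_coe_set_eq, hn]
  have hbij : Function.Bijective ψ := (Nat.bijective_iff_injective_and_card ψ).mpr ⟨hinj, hcard⟩
  intro A hA
  obtain ⟨i, hi⟩ := hbij.2 ⟨A, hA⟩
  exact ⟨i, by simpa [hψ, Subtype.ext_iff] using hi⟩

/-- the partial transversals are faces -/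
lemma partial_face : ∀ m : ℕ, m ≤ n → (x '' {i | i.val < m}) ∈ H := by
  intro m
  induction m with
  | zero => intro _; simpa using empty_mem_H cpx
  | succ m ih =>
    intro hm
    have hmn : m < n := hm
    have hJ : (x '' {i | i.val < m}) ∈ H := ih (le_of_lt hm)
    have heq : (x '' {i | i.val < m + 1}) = insert (x ⟨m, hmn⟩) (x '' {i | i.val < m}) := by
      ext z
      simp only [Set.mem_image, Set.mem_insert_iff, Set.mem_setOf_eq]
      constructor
      · rintro ⟨i, hi, rfl⟩
        rcases Nat.lt_succ_iff_lt_or_eq.mp hi with h | h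
        · exact Or.inr ⟨i, h, rfl⟩
        · left; congr 1; exact Fin.ext h
      · rintro (rfl | ⟨i, hi, rfl⟩)
        · exact ⟨⟨m, hmn⟩, Nat.lt_succ_self m, rfl⟩
        · exact ⟨i, Nat.lt_succ_of_lt hi, rfl⟩
    rw [heq]
    have hGm : IsCFlat V H (G ⟨m, by omega⟩) := hGflat _
    apply face_insert cpx hGm hJ
    · rintro z ⟨i, hi, rfl⟩
      have : G i.succ ≤ G ⟨m, by omega⟩ := by
        apply hGmono.monotone
        simp only [Fin.le_def, Fin.val_succ]
        exact hi
      exact this (hx1 i)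
    · exact x_mem_V cpx br hGflat hGmono hx1 hx2 _
    · have := hx2 ⟨m, hmn⟩
      have hcs : (⟨m, hmn⟩ : Fin n).castSucc = (⟨m, by omega⟩ : Fin (n+1)) := rfl
      rwa [hcs] at this

lemma X_face : Set.range x ∈ H := by
  have := partial_face cpx br hGflat hGmono hx1 hx2 n le_rfl
  have heq : {i : Fin n | i.val < n} = Set.univ := by
    ext i; simp [i.isLt]
  rw [heq, Set.image_univ] at this
  exact this

include hmax hn in
set_option maxHeartbeats 2000000 in
/-- independence of atoms -/
lemma P1 : ∀ (k : ℕ) (T : Set (Set α)), T ⊆ Ats V H → T.ncard = k →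
    ∀ Ar ∈ Ats V H, Ar ∉ T → ¬ Ar ⊆ Joinf V H T := by
  have hAtsfin : (Ats V H).Finite := by
    apply Set.Finite.subset (Set.Finite.finite_subsets cpx.1)
    intro A hA
    exact hA.1.1
  intro k
  induction k using Nat.strong_induction_on with
  | _ k IH =>
  intro T hTA hTk Ar hAr hArT hviol
  have hTfin : T.Finite := hAtsfin.subset hTA
  rcases Nat.eq_zero_or_pos k with rfl | hk
  · rw [Set.ncard_eq_zero hTfin] at hTk
    subst hTk
    rw [Joinf_empty] at hviol
    exact hAr.2.1.not_subset hviol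
  -- k ≥ 1
  have hTne : T.Nonempty := by
    rw [Set.nonempty_iff_ne_empty]
    rintro rfl
    simp at hTk
    omega
  have hMflat : IsCFlat V H (Joinf V H T) := Joinf_flat (fun t ht => (hTA ht).1)
  set M := Joinf V H T with hMdef
  set ABM := {A | A ∈ Ats V H ∧ A ⊆ M} with hABM
  set E := ABM \ T with hE
  have hT_ABM : T ⊆ ABM := fun t ht => ⟨hTA ht, flat_subset_Joinf ht⟩
  have exact_small : ∀ S : Set (Set α), S ⊆ Ats V H → S.ncard < k →
      ∀ ξ ∈ Ats V H, ξ ⊆ Joinf V H S → ξ ∈ S := by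
    intro S hSA hSk ξ hξ hξS
    by_contra hc
    exact IH S.ncard hSk S hSA rfl ξ hξ hc hξS
  by_cases hsym : ∀ t ∈ T, t ⊆ Joinf V H ((T \ {t}) ∪ E)
  · -- symmetric case
    have claim : ∀ u ∈ ABM, u ⊆ Joinf V H (ABM \ {u}) := by
      intro u hu
      by_cases huT : u ∈ T
      · refine (hsym u huT).trans (Joinf_mono ?_)
        rintro A (hA | hA)
        · exact ⟨hT_ABM hA.1, hA.2⟩
        · exact ⟨hA.1, fun h => hA.2 (h ▸ huT)⟩
      · refine Set.Subset.trans hu.2 (Joinf_mono ?_)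
        intro t ht
        exact ⟨hT_ABM ht, fun h => huT (h ▸ ht)⟩
    set J := x '' {i | pcl V H (x i) ⊆ M} with hJdef
    have hJH : J ∈ H :=
      cpx.2.2.2.2 _ (X_face cpx br hGflat hGmono hx1 hx2) J (Set.image_subset_range _ _)
    have hJne : J.Nonempty := by
      obtain ⟨t, ht⟩ := hTne
      obtain ⟨i, hi⟩ := atoms_eq_pcl_x cpx br hn hGflat hGmono hx1 hx2 t (hTA ht)
      exact ⟨x i, ⟨i, by rw [Set.mem_setOf_eq, hi]; exact flat_subset_Joinf ht, rfl⟩⟩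
    obtain ⟨kJ, F, y, hFflat, hFmono, hyinj, hyrange, hymem⟩ := br J hJH
    have hkJ : 0 < kJ := by
      rcases Nat.eq_zero_or_pos kJ with rfl | h
      · rw [hyrange] at hJne
        simpa using hJne
      · exact h
    set lidx : Fin kJ := ⟨kJ - 1, by omega⟩ with hlidx
    set lst := y lidx with hlst
    have hlstJ : lst ∈ J := by rw [hyrange]; exact ⟨lidx, rfl⟩
    obtain ⟨i₀, hi₀M, hi₀⟩ := hlstJ
    rw [Set.mem_setOf_eq] at hi₀M
    set ustar := pcl V H (x i₀) with hustar
    have hustarABM : ustar ∈ ABM :=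
      ⟨pcl_x_atom cpx br hGflat hGmono hx1 hx2 i₀, hi₀M⟩
    set D := F lidx.castSucc with hD
    have hDflat : IsCFlat V H D := hFflat _
    have key : ∀ A ∈ ABM, A ≠ ustar → A ⊆ D := by
      intro A hA hAne
      obtain ⟨i, hi⟩ := atoms_eq_pcl_x cpx br hn hGflat hGmono hx1 hx2 A hA.1
      have hxiJ : x i ∈ J := ⟨i, by rw [Set.mem_setOf_eq, hi]; exact hA.2, rfl⟩
      rw [hyrange] at hxiJ
      obtain ⟨j, hj⟩ := hxiJ
      have hjne : j ≠ lidx := by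
        rintro rfl
        apply hAne
        rw [← hi, hustar]
        have : x i = x i₀ := by rw [← hj, ← hlst, hi₀]
        rw [this]
      have hjlt : j.val < kJ - 1 := by
        have := j.isLt
        rcases Nat.lt_or_ge j.val (kJ - 1) with h | h
        · exact h
        · have hveq : j.val = lidx.val := by
            show j.val = kJ - 1
            omega
          exact absurd (Fin.ext hveq) hjne
      have hyjD : y j ∈ D := by
        have hle : F j.succ ≤ F lidx.castSucc := by
          apply hFmono.monotone
          rw [Fin.le_def]
          simpa using by omega
        exact hle (hymem j).1
      rw [← hi, ← hj]
      exact pcl_subset hDflat hyjD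
    have hcontra : lst ∈ D := by
      have h1 : ustar ⊆ Joinf V H (ABM \ {ustar}) := claim ustar hustarABM
      have h2 : Joinf V H (ABM \ {ustar}) ⊆ D :=
        Joinf_min hDflat (fun A hA => key A hA.1 hA.2)
      apply h1.trans h2
      rw [← hi₀]
      exact mem_pcl
    exact (hymem lidx).2 hcontra
  · -- asymmetric case
    push_neg at hsym
    obtain ⟨tstar, htstarT, htstar⟩ := hsym
    set Z := bt V H ∪ ⋃₀ T with hZ
    have hZV : Z ⊆ V := Set.union_subset flat_bt.1 (Set.sUnion_subset fun t ht => (hTA ht).1.1)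
    have hZflat : IsCFlat V H Z := by
      refine ⟨hZV, fun I hI hIZ p hp => ?_⟩
      have hpV : p ∈ V := hp.1
      have hpB : p ∉ bt V H := fun h => hp.2 (Set.mem_union_left _ h)
      have hξat : AtFl V H (pcl V H p) := pcl_atom cpx br hpV hpB
      have hξT : pcl V H p ∉ T := by
        intro h
        exact hp.2 (Set.mem_union_right _ (Set.mem_sUnion.mpr ⟨_, h, mem_pcl⟩))
      have hclass : ∀ ι ∈ I, ι ∈ V ∧ ι ∉ bt V H ∧ pcl V H ι ∈ T ∧ ι ∈ pcl V H ι := by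
        intro ι hι
        have hιB : ι ∉ bt V H := face_notin_bt cpx br hI hι
        have hιV : ι ∈ V := cpx.2.2.2.1 I hI hι
        rcases hIZ hι with h | h
        · exact absurd h hιB
        · obtain ⟨t, htT, hιt⟩ := h
          have := atom_eq_pcl cpx br (hTA htT) hιt hιB
          exact ⟨hιV, hιB, this ▸ htT, mem_pcl⟩
      by_cases hpM : p ∈ M
      · -- p within the span
        have hξM : pcl V H p ⊆ M := pcl_subset hMflat hpM
        have hξE : pcl V H p ∈ E := ⟨⟨hξat, hξM⟩, hξT⟩
        set I₀ := {ι ∈ I | pcl V H ι ≠ tstar} with hI₀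
        have hI₀H : I₀ ∈ H := cpx.2.2.2.2 I hI I₀ (Set.sep_subset _ _)
        have hI₀V : bt V H ∪ I₀ ⊆ V := Set.union_subset flat_bt.1
          (fun ι hι => (hclass ι hι.1).1)
        have hW₀flat : IsCFlat V H (clo V H (bt V H ∪ I₀)) := clo_flat hI₀V
        have hpW₀ : p ∉ clo V H (bt V H ∪ I₀) := by
          intro hmem
          have hξW : pcl V H p ⊆ clo V H (bt V H ∪ I₀) := pcl_subset hW₀flat hmem
          set S := pcl V H '' I₀ with hS
          have hWS : clo V H (bt V H ∪ I₀) ⊆ Joinf V H S := by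
            apply clo_min (Joinf_flat ?_)
            · apply Set.union_subset bt_subset_Joinf
              intro ι hι
              have hmem2 : pcl V H ι ∈ pcl V H '' I₀ := Set.mem_image_of_mem _ hι
              exact flat_subset_Joinf hmem2 (hclass ι hι.1).2.2.2
            · rintro t ⟨ι, hι, rfl⟩
              exact (hTA ((hclass ι hι.1).2.2.1)).1
          have hSsub : S ⊆ T \ {tstar} := by
            rintro t ⟨ι, hι, rfl⟩
            exact ⟨(hclass ι hι.1).2.2.1, hι.2⟩
          have hSk : S.ncard < k := by
            calc S.ncard ≤ (T \ {tstar}).ncard :=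
                  Set.ncard_le_ncard hSsub (hTfin.subset Set.diff_subset)
            _ < T.ncard := Set.ncard_diff_singleton_lt_of_mem htstarT hTfin
            _ = k := hTk
          have := exact_small S (fun t ht => hTA ((hSsub ht).1)) hSk
            (pcl V H p) hξat (hξW.trans hWS)
          exact hξT (hSsub this).1
        have hI₀W : I₀ ⊆ clo V H (bt V H ∪ I₀) :=
          fun ι hι => subset_clo (Set.mem_union_right _ hι)
        have hJ₁ : insert p I₀ ∈ H := face_insert cpx hW₀flat hI₀H hI₀W hpV hpW₀
        by_cases hstar : ∃ ι ∈ I, pcl V H ι = tstar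
        · obtain ⟨ιs, hιsI, hιs⟩ := hstar
          have hJ₁V : bt V H ∪ insert p I₀ ⊆ V := by
            apply Set.union_subset flat_bt.1
            apply Set.insert_subset hpV
            intro ι hι
            exact (hclass ι hι.1).1
          have hD₁flat : IsCFlat V H (clo V H (bt V H ∪ insert p I₀)) := clo_flat hJ₁V
          have hιsD : ιs ∉ clo V H (bt V H ∪ insert p I₀) := by
            intro hmem
            have hstep : pcl V H ιs ⊆ Joinf V H ((T \ {tstar}) ∪ E) := by
              apply (pcl_subset hD₁flat hmem).trans
              apply clo_min (Joinf_flat ?_)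
              · apply Set.union_subset bt_subset_Joinf
                apply Set.insert_subset
                · exact flat_subset_Joinf (Set.mem_union_right _ hξE) mem_pcl
                · intro ι hι
                  have hmem2 : pcl V H ι ∈ T \ {tstar} := ⟨(hclass ι hι.1).2.2.1, hι.2⟩
                  exact flat_subset_Joinf (Set.mem_union_left _ hmem2) (hclass ι hι.1).2.2.2
              · rintro t (ht | ht)
                · exact (hTA ht.1).1
                · exact ht.1.1.1
            exact htstar (hιs ▸ hstep)
          have hres : insert ιs (insert p I₀) ∈ H :=
            face_insert cpx hD₁flat hJ₁
              (fun z hz => subset_clo (Set.mem_union_right _ hz)) (hclass ιs hιsI).1 hιsD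
          have heqI : I = insert ιs I₀ := by
            ext z
            simp only [Set.mem_insert_iff, hI₀, Set.mem_setOf_eq]
            constructor
            · intro hz
              by_cases hzc : pcl V H z = tstar
              · left
                by_contra hne
                exact face_classes_distinct cpx br hI hz hιsI hne (hzc.trans hιs.symm)
              · exact Or.inr ⟨hz, hzc⟩
            · rintro (rfl | ⟨hz, _⟩)
              · exact hιsI
              · exact hz
          rw [heqI, Set.insert_comm]
          exact hres
        · have heqI : I₀ = I := by
            apply Set.eq_of_subset_of_subset (Set.sep_subset _ _)
            intro ι hι
            exact ⟨hι, fun hc => hstar ⟨ι, hι, hc⟩⟩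
          rw [← heqI]
          exact hJ₁
      · -- p outside the span
        have hIM : I ⊆ M := by
          intro ι hι
          exact flat_subset_Joinf ((hclass ι hι).2.2.1) ((hclass ι hι).2.2.2)
        exact face_insert cpx hMflat hI hIM hpV hpM
    -- now conclude: M = Z, contradiction
    have hMZ : M = Z := clo_flat_self hZflat
    obtain ⟨ρ, hρA, hρB⟩ := atom_exists_pt cpx br hAr
    have hρZ : ρ ∈ Z := hMZ ▸ hviol hρA
    rcases hρZ with h | h
    · exact hρB h
    · obtain ⟨t, htT, hρt⟩ := h
      have h1 := atom_eq_pcl cpx br (hTA htT) hρt hρB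
      have h2 := atom_eq_pcl cpx br hAr hρA hρB
      exact hArT (h2 ▸ h1 ▸ htT)


include hmax hn in
/-- every set of atoms is realized as the atom-set of a flat -/
lemma atoms_surj : ∀ 𝒯 ⊆ Ats V H, ∃ Z, IsCFlat V H Z ∧
    ∀ A ∈ Ats V H, (A ⊆ Z ↔ A ∈ 𝒯) := by
  intro 𝒯 h𝒯
  set Z := bt V H ∪ ⋃₀ 𝒯 with hZdef
  have hZV : Z ⊆ V := Set.union_subset flat_bt.1 (Set.sUnion_subset fun t ht => (h𝒯 ht).1.1)
  have hZflat : IsCFlat V H Z := by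
    refine ⟨hZV, fun I hI hIZ p hp => ?_⟩
    have hpV : p ∈ V := hp.1
    have hpB : p ∉ bt V H := fun h => hp.2 (Set.mem_union_left _ h)
    have hξat : AtFl V H (pcl V H p) := pcl_atom cpx br hpV hpB
    have hξ𝒯 : pcl V H p ∉ 𝒯 := by
      intro h
      exact hp.2 (Set.mem_union_right _ (Set.mem_sUnion.mpr ⟨_, h, mem_pcl⟩))
    have hclass : ∀ ι ∈ I, ι ∈ V ∧ pcl V H ι ∈ 𝒯 ∧ ι ∈ pcl V H ι := by
      intro ι hι
      have hιB : ι ∉ bt V H := face_notin_bt cpx br hI hι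
      have hιV : ι ∈ V := cpx.2.2.2.1 I hI hι
      rcases hIZ hι with h | h
      · exact absurd h hιB
      · obtain ⟨t, htT, hιt⟩ := h
        have := atom_eq_pcl cpx br (h𝒯 htT) hιt hιB
        exact ⟨hιV, this ▸ htT, mem_pcl⟩
    have hIV : bt V H ∪ I ⊆ V := Set.union_subset flat_bt.1 (fun ι hι => (hclass ι hι).1)
    have hWflat : IsCFlat V H (clo V H (bt V H ∪ I)) := clo_flat hIV
    have hpW : p ∉ clo V H (bt V H ∪ I) := by
      intro hmem
      have hξW : pcl V H p ⊆ clo V H (bt V H ∪ I) := pcl_subset hWflat hmem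
      set S := pcl V H '' I with hS
      have hS𝒜 : S ⊆ Ats V H := by
        rintro t ⟨ι, hι, rfl⟩
        exact h𝒯 (hclass ι hι).2.1
      have hWS : clo V H (bt V H ∪ I) ⊆ Joinf V H S := by
        apply clo_min (Joinf_flat (fun t ht => (hS𝒜 ht).1))
        apply Set.union_subset bt_subset_Joinf
        intro ι hι
        exact flat_subset_Joinf (Set.mem_image_of_mem _ hι) (hclass ι hι).2.2
      have hξS : pcl V H p ∉ S := by
        rintro ⟨ι, hι, heq⟩
        exact hξ𝒯 (heq ▸ (hclass ι hι).2.1)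
      exact P1 cpx br hmax hn hGflat hGmono hx1 hx2 S.ncard S hS𝒜 rfl
        (pcl V H p) hξat hξS (hξW.trans hWS)
    exact face_insert cpx hWflat hI (fun ι hι => subset_clo (Set.mem_union_right _ hι)) hpV hpW
  refine ⟨Z, hZflat, fun A hA => ⟨fun hAZ => ?_, fun hA𝒯 => ?_⟩⟩
  · obtain ⟨ρ, hρA, hρB⟩ := atom_exists_pt cpx br hA
    rcases hAZ hρA with h | h
    · exact absurd h hρB
    · obtain ⟨t, htT, hρt⟩ := h
      have h1 := atom_eq_pcl cpx br (h𝒯 htT) hρt hρB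
      have h2 := atom_eq_pcl cpx br hA hρA hρB
      rw [← h2, h1]
      exact htT
  · exact (Set.subset_sUnion_of_mem hA𝒯).trans Set.subset_union_right

/-- flats are separated by the atoms below them -/
lemma flats_sep : ∀ F G₂ : Set α, IsCFlat V H F → IsCFlat V H G₂ →
    (∀ A ∈ Ats V H, A ⊆ F → A ⊆ G₂) → F ⊆ G₂ := by
  intro F G₂ hF hG h p hpF
  by_cases hpB : p ∈ bt V H
  · exact bt_subset hG hpB
  · have hat : AtFl V H (pcl V H p) := pcl_atom cpx br (hF.1 hpF) hpB
    exact h _ hat (pcl_subset hF hpF) mem_pcl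


end Main
end WithBR
end BRWork

section Assembly

open BRWork

variable {L : Type v} [Lattice L] [Fintype L] [OrderBot L]

/-- atom correspondence along the order isomorphism -/
lemma e_bot {α : Type u} {V : Set α} {H : Set (Set α)}
    (e : L ≃o {F : Set α // IsCFlat V H F}) :
    e ⊥ = ⟨bt V H, flat_bt⟩ := by
  apply le_antisymm
  · have h1 : (⊥ : L) ≤ e.symm ⟨bt V H, flat_bt⟩ := bot_le
    have h2 := e.monotone h1
    rwa [e.apply_symm_apply] at h2
  · exact bt_subset (e ⊥).prop

lemma atom_corr {α : Type u} {V : Set α} {H : Set (Set α)}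
    (e : L ≃o {F : Set α // IsCFlat V H F}) (a : L) :
    IsAtom a ↔ AtFl V H (e a).val := by
  constructor
  · intro ha
    refine ⟨(e a).prop, ?_, ?_⟩
    · have h1 : (⊥ : L) < a := ha.1.bot_lt
      have h2 : e ⊥ < e a := e.strictMono h1
      rw [e_bot e] at h2
      exact h2
    · intro D hD hDlt
      have h1 : (⟨D, hD⟩ : {F : Set α // IsCFlat V H F}) < e a := hDlt
      have h2 : e.symm ⟨D, hD⟩ < a := by
        have := e.symm.strictMono h1
        rwa [e.symm_apply_apply] at this
      have h3 := ha.2 _ h2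
      have h4 : (⟨D, hD⟩ : {F : Set α // IsCFlat V H F}) = e ⊥ := by
        rw [← h3, e.apply_symm_apply]
      rw [e_bot e] at h4
      exact congrArg Subtype.val h4
  · intro hA
    constructor
    · intro hbot
      have := hA.2.1
      rw [hbot, e_bot e] at this
      exact this.ne rfl
    · intro b hb
      have h1 : e b < e a := e.strictMono hb
      have h2 : (e b).val ⊂ (e a).val := h1
      have h3 := hA.2.2 _ (e b).prop h2
      have h4 : e b = e ⊥ := by
        rw [e_bot e]
        exact Subtype.ext h3
      exact e.injective h4

/-- the forward direction -/
theorem forward_dir {α : Type u} {V : Set α} {H : Set (Set α)}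
    (hh : hasHeight L (Nat.card {a : L | IsAtom a}))
    (cpx : IsCpx V H) (br : BoolRep V H)
    (e : L ≃o {F : Set α // IsCFlat V H F}) :
    Nonempty (L ≃o Set {a : L | IsAtom a}) := by
  set n := Nat.card {a : L | IsAtom a} with hdefn
  -- the transported chain
  obtain ⟨c, hc⟩ := hh.1
  set G : Fin (n + 1) → Set α := fun i => (e (c i)).val with hG
  have hGflat : ∀ i, IsCFlat V H (G i) := fun i => (e (c i)).prop
  have hGmono : StrictMono G := by
    intro i j hij
    exact e.strictMono (hc hij)
  -- the transported maximality
  have hmax : ∀ (m : ℕ) (c' : Fin (m + 1) → Set α),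
      (∀ i, IsCFlat V H (c' i)) → StrictMono c' → m ≤ n := by
    intro m c' hflat hmono
    apply hh.2 m (fun i => e.symm ⟨c' i, hflat i⟩)
    intro i j hij
    exact e.symm.strictMono (show (⟨c' i, _⟩ : {F : Set α // IsCFlat V H F}) < ⟨c' j, _⟩
      from hmono hij)
  -- atom count
  have hcorr : ∀ A : {F : Set α // IsCFlat V H F}, AtFl V H A.val ↔
      IsAtom (e.symm A) := by
    intro A
    rw [atom_corr e (e.symm A), e.apply_symm_apply]
  have hequiv : ↥(Ats V H) ≃ ↥{a : L | IsAtom a} := by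
    refine ⟨fun A => ⟨e.symm ⟨A.val, A.prop.1⟩, (hcorr ⟨A.val, A.prop.1⟩).mp A.prop⟩,
      fun a => ⟨(e a.val).val, (atom_corr e a.val).mp a.prop⟩, ?_, ?_⟩
    · intro A
      apply Subtype.ext
      simp only
      rw [e.apply_symm_apply]
    · intro a
      apply Subtype.ext
      exact e.symm_apply_apply a.val
  have hn : (Ats V H).ncard = n := by
    rw [← Nat.card_coe_set_eq, Nat.card_congr hequiv, hdefn]
  -- choose transversal points
  have hstep : ∀ i : Fin n, ∃ p, p ∈ G i.succ ∧ p ∉ G i.castSucc := by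
    intro i
    have := hGmono (Fin.castSucc_lt_succ (i := i))
    obtain ⟨p, hp1, hp2⟩ := Set.exists_of_ssubset this
    exact ⟨p, hp1, hp2⟩
  choose x hx1 hx2 using hstep
  -- conclude
  have hsurj := atoms_surj cpx br hmax hn hGflat hGmono hx1 hx2
  have hsep := flats_sep cpx br (hGflat := hGflat) (hGmono := hGmono) (hx1 := hx1) (hx2 := hx2)
  -- the map
  set f : L → Set ↥{a : L | IsAtom a} := fun z => {a | a.val ≤ z} with hf
  have hrefl : ∀ z w : L, f z ⊆ f w → z ≤ w := by
    intro z w hzw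
    have h1 : (e z).val ⊆ (e w).val := by
      apply hsep _ _ (e z).prop (e w).prop
      intro A hA hAz
      have haL : IsAtom (e.symm ⟨A, hA.1⟩) := (hcorr ⟨A, hA.1⟩).mp hA
      have h2 : e.symm ⟨A, hA.1⟩ ≤ z := by
        have : (⟨A, hA.1⟩ : {F : Set α // IsCFlat V H F}) ≤ e z := hAz
        have h3 := e.symm.monotone this
        rwa [e.symm_apply_apply] at h3
      have h4 : (⟨e.symm ⟨A, hA.1⟩, haL⟩ : ↥{a : L | IsAtom a}) ∈ f z := h2
      have h5 := hzw h4
      have h6 : e.symm ⟨A, hA.1⟩ ≤ w := h5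
      have h7 := e.monotone h6
      rwa [e.apply_symm_apply] at h7
    exact e.le_iff_le.mp h1
  have hmono : ∀ z w : L, z ≤ w → f z ⊆ f w := by
    intro z w h a ha
    exact le_trans ha h
  have hsurjf : Function.Surjective f := by
    intro s
    set g : ↥{a : L | IsAtom a} → Set α := fun a => (e a.val).val with hg
    have hginj : Function.Injective g := by
      intro a b hab
      apply Subtype.ext
      exact e.injective (Subtype.ext hab)
    obtain ⟨Z, hZflat, hZiff⟩ := hsurj (g '' s) (by
      rintro A ⟨a, ha, rfl⟩
      exact (atom_corr e a.val).mp a.prop)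
    refine ⟨e.symm ⟨Z, hZflat⟩, ?_⟩
    ext a
    have h1 : a.val ≤ e.symm ⟨Z, hZflat⟩ ↔ g a ⊆ Z := by
      constructor
      · intro h
        have h2 := e.monotone h
        rw [e.apply_symm_apply] at h2
        exact h2
      · intro h
        have h2 : e a.val ≤ ⟨Z, hZflat⟩ := h
        have h3 := e.symm.monotone h2
        rwa [e.symm_apply_apply] at h3
    have h2 : g a ∈ g '' s ↔ a ∈ s := by
      constructor
      · rintro ⟨b, hb, hba⟩
        rwa [← hginj hba]
      · intro h
        exact ⟨a, h, rfl⟩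
    simp only [hf, Set.mem_setOf_eq]
    rw [h1, hZiff (g a) ((atom_corr e a.val).mp a.prop), h2]
  have hinjf : Function.Injective f := by
    intro z w h
    exact le_antisymm (hrefl z w h.le) (hrefl w z h.ge)
  refine ⟨⟨Equiv.ofBijective f ⟨hinjf, hsurjf⟩, ?_⟩⟩
  intro z w
  constructor
  · intro h
    exact hrefl z w h
  · intro h
    exact hmono z w h

end Assembly

section Backward

variable {L : Type v} [Lattice L] [Fintype L] [OrderBot L]

/-- the complex used in the backward direction -/
theorem backward_dir (e₀ : L ≃o Set {a : L | IsAtom a}) :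
    ∃ (V : Set L) (H : Set (Set L)), IsCpx V H ∧ BoolRep V H ∧
      Nonempty (L ≃o {F : Set L // IsCFlat V H F}) := by
  classical
  set A : Set L := {a : L | IsAtom a} with hA
  set V : Set L := insert ⊥ A with hV
  set H : Set (Set L) := {X | X ⊆ A} with hH
  have hbotA : (⊥ : L) ∉ A := fun h => h.1 rfl
  have hAV : A ⊆ V := Set.subset_insert _ _
  have hcpx : IsCpx V H := by
    refine ⟨Set.toFinite V, ⟨⊥, Set.mem_insert _ _⟩, ⟨∅, Set.empty_subset _⟩,
      fun X hX => hX.trans hAV, fun X hX Y hY => hY.trans hX⟩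
  -- characterization of flats
  have hflat_iff : ∀ F : Set L, IsCFlat V H F ↔ F ⊆ V ∧ ⊥ ∈ F := by
    intro F
    constructor
    · intro h
      refine ⟨h.1, ?_⟩
      by_contra hbF
      have h2 := h.2 ∅ (Set.empty_subset _) (Set.empty_subset _) ⊥ ⟨Set.mem_insert _ _, hbF⟩
      have h3 : (⊥ : L) ∈ A := h2 (Set.mem_insert _ _)
      exact hbotA h3
    · intro ⟨h1, h2⟩
      refine ⟨h1, fun I hI hIF p hp => ?_⟩
      have hpA : p ∈ A := by
        rcases hp.1 with h | h
        · exact absurd (h ▸ h2) hp.2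
        · exact h
      exact Set.insert_subset hpA hI
  -- boolean representability
  have hbr : BoolRep V H := by
    intro X hX
    have hXA : X ⊆ A := hX
    have hXfin : X.Finite := Set.toFinite X
    haveI := hXfin.fintype
    set k := Fintype.card X with hk
    set eq := (Fintype.equivFin ↥X).symm with heq
    set x : Fin k → L := fun i => (eq i).val with hx
    have hxinj : Function.Injective x := fun i j h =>
      eq.injective (Subtype.ext h)
    have hxX : ∀ i, x i ∈ X := fun i => (eq i).prop
    have hxA : ∀ i, x i ∈ A := fun i => hXA (hxX i)
    have hxbot : ∀ i, x i ≠ ⊥ := fun i => (hxA i).1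
    set F : Fin (k + 1) → Set L := fun i => insert ⊥ (x '' {j | j.val < i.val}) with hF
    have hFflat : ∀ i, IsCFlat V H (F i) := by
      intro i
      rw [hflat_iff]
      constructor
      · apply Set.insert_subset (Set.mem_insert _ _)
        rintro z ⟨j, _, rfl⟩
        exact hAV (hxA j)
      · exact Set.mem_insert _ _
    have hmemF : ∀ (j : Fin k) (i : Fin (k+1)), x j ∈ F i ↔ j.val < i.val := by
      intro j i
      constructor
      · rintro (h | ⟨j', hj', hjj⟩)
        · exact absurd h (hxbot j)
        · rwa [← hxinj hjj]
      · intro h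
        exact Set.mem_insert_of_mem _ ⟨j, h, rfl⟩
    have hFmono : StrictMono F := by
      intro i j hij
      constructor
      · apply Set.insert_subset_insert
        apply Set.image_mono
        intro m hm
        have hm' : m.val < i.val := hm
        exact lt_of_lt_of_le hm' (le_of_lt hij)
      · intro hsub
        have hik : i.val < k := lt_of_lt_of_le hij (Nat.lt_succ_iff.mp j.isLt)
        have h1 : x ⟨i.val, hik⟩ ∈ F j := (hmemF _ _).mpr hij
        have h2 := hsub h1
        rw [hmemF] at h2
        simp at h2
    refine ⟨k, F, x, hFflat, hFmono, hxinj, ?_, ?_⟩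
    · ext z
      constructor
      · intro hz
        exact ⟨eq.symm ⟨z, hz⟩, by simp [hx]⟩
      · rintro ⟨i, rfl⟩
        exact hxX i
    · intro i
      constructor
      · rw [hmemF]
        simp
      · rw [hmemF]
        simp
  -- the order isomorphism with the flats
  have hiso : Nonempty (L ≃o {F : Set L // IsCFlat V H F}) := by
    set Φ : Set ↥A ≃o {F : Set L // IsCFlat V H F} := {
      toFun := fun s => ⟨insert ⊥ (Subtype.val '' s), by
        rw [hflat_iff]
        exact ⟨Set.insert_subset (Set.mem_insert _ _)
          (fun z ⟨a, _, ha⟩ => hAV (ha ▸ a.prop)), Set.mem_insert _ _⟩⟩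
      invFun := fun F => {a : ↥A | a.val ∈ F.val}
      left_inv := by
        intro s
        ext a
        simp only [Set.mem_setOf_eq, Set.mem_insert_iff]
        constructor
        · rintro (h | ⟨b, hb, hba⟩)
          · exact absurd (h ▸ a.prop) hbotA
          · rwa [← Subtype.ext hba]
        · intro h
          exact Or.inr ⟨a, h, rfl⟩
      right_inv := by
        intro F
        apply Subtype.ext
        simp only
        apply Set.eq_of_subset_of_subset
        · apply Set.insert_subset ((hflat_iff F.val).mp F.prop).2
          rintro z ⟨a, ha, rfl⟩
          exact ha
        · intro z hz
          rcases ((hflat_iff F.val).mp F.prop).1 hz with h | h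
          · exact h ▸ Set.mem_insert _ _
          · exact Set.mem_insert_of_mem _ ⟨⟨z, h⟩, hz, rfl⟩
      map_rel_iff' := by
        intro s t
        simp only [Equiv.coe_fn_mk]
        constructor
        · intro h a ha
          have h2 : a.val ∈ insert ⊥ (Subtype.val '' t) := by
            apply h
            exact Set.mem_insert_of_mem _ ⟨a, ha, rfl⟩
          rcases h2 with h2 | ⟨b, hb, hba⟩
          · exact absurd (h2 ▸ a.prop) hbotA
          · rwa [← Subtype.ext hba]
        · intro h
          apply Set.insert_subset_insert
          exact Set.image_mono h }
    exact ⟨e₀.trans Φ⟩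
  exact ⟨V, H, hcpx, hbr, hiso⟩

end Backward


/-- If `L` is a finite lattice whose height equals its number of atoms, then `L`
is isomorphic to the lattice of flats of some boolean representable finite
simplicial complex iff `L` is isomorphic to the powerset lattice `(2^{At(L)}, ⊆)`. -/
theorem stmt15 (L : Type u) [Lattice L] [Fintype L] [OrderBot L]
    (hh : hasHeight L (Nat.card {a : L | IsAtom a})) :
    (∃ (α : Type u) (V : Set α) (H : Set (Set α)), IsCpx V H ∧ BoolRep V H ∧
        Nonempty (L ≃o {F : Set α // IsCFlat V H F})) ↔
    Nonempty (L ≃o Set {a : L | IsAtom a}) := by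
  constructor
  · rintro ⟨α, V, H, cpx, br, ⟨e⟩⟩
    exact forward_dir hh cpx br e
  · rintro ⟨e₀⟩
    obtain ⟨V, H, hcpx, hbr, hiso⟩ := backward_dir e₀
    exact ⟨L, V, H, hcpx, hbr, hiso⟩
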